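/- arXiv:2209.08913 — 3 statements merged into one kernel-verified Lean document; each statement's English description precedes it below -/
import Mathlib

section
/- Let l ≥ 0 be an integer, y > 0 and σ > 1/2. Then ψ_l(y) = (1/(2π·l!)) ∫_{−∞}^{∞} π^{−(σ+iτ)} · ζ(2(σ+iτ)) · Γ(l+σ+iτ) · y^{σ+iτ} dτ, the integral being absolutely convergent. -/
open MeasureTheory

section Aux

open Complex Set

lemma abs_Gamma_le {z : ℂ} (hz : 0 < z.re) :
    ‖Complex.Gamma z‖ ≤ Real.Gamma z.re := by
  rw [Complex.Gamma_eq_integral hz, Real.Gamma_eq_integral hz, Complex.GammaIntegral]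
  refine le_trans (norm_integral_le_integral_norm _) (le_of_eq ?_)
  refine setIntegral_congr_fun measurableSet_Ioi (fun x hx => ?_)
  rw [norm_mul, Complex.norm_cpow_eq_rpow_re_of_pos hx, Complex.norm_real, Real.norm_eq_abs,
    _root_.abs_of_nonneg (Real.exp_pos _).le]
  simp

lemma gamma_vert_bound {a : ℝ} (ha : 0 < a) (τ : ℝ) :
    ‖Complex.Gamma (↑a + ↑τ * Complex.I)‖ ≤
      (2 * Real.Gamma (a + 2) / (min a 1) ^ 2) * (1 + τ ^ 2)⁻¹ := by
  set z : ℂ := ↑a + ↑τ * Complex.I with hz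
  have hzre : z.re = a := by simp [hz]
  have hz0 : z ≠ 0 := fun h => by simp [h] at hzre; linarith
  have hz1 : z + 1 ≠ 0 := fun h => by
    have h2 : (z+1).re = a + 1 := by simp [hzre]
    rw [h] at h2; simp at h2; linarith
  have key : Complex.Gamma z = Complex.Gamma (z + 2) / ((z + 1) * z) := by
    have h1 : Complex.Gamma (z + 1) = z * Complex.Gamma z := Complex.Gamma_add_one z hz0
    have h2 : Complex.Gamma (z + 2) = (z + 1) * Complex.Gamma (z + 1) := by
      have := Complex.Gamma_add_one (z+1) hz1
      rw [← this]; ring_nf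
    rw [h2, h1]; field_simp
  rw [key]
  have habs : ‖Complex.Gamma (z + 2)‖ ≤ Real.Gamma (a + 2) := by
    have h3 : (z + 2).re = a + 2 := by simp [hzre]
    have h4 := abs_Gamma_le (z := z + 2) (by rw [h3]; linarith)
    rwa [h3] at h4
  set c : ℝ := min a 1 with hc
  have hc0 : 0 < c := lt_min ha one_pos
  have hzabs : ‖z‖ ^ 2 ≥ max (a^2) (τ^2) := by
    have : ‖z‖ ^ 2 = a^2 + τ^2 := by
      rw [← Complex.normSq_eq_norm_sq, hz]
      simp [Complex.normSq_apply]; ring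
    rw [this]
    rcases le_total (a^2) (τ^2) with h | h
    · rw [max_eq_right h]; nlinarith
    · rw [max_eq_left h]; nlinarith
  have hz1abs : ‖z+1‖ ^ 2 ≥ max (a^2) (τ^2) := by
    have : ‖z+1‖ ^ 2 = (a+1)^2 + τ^2 := by
      rw [← Complex.normSq_eq_norm_sq]
      have : z + 1 = ↑(a+1) + ↑τ * Complex.I := by rw [hz]; push_cast; ring
      rw [this]; simp [Complex.normSq_apply]; ring
    rw [this]
    rcases le_total (a^2) (τ^2) with h | h <;> [skip; skip] <;>
      first
      | (rw [max_eq_right h]; nlinarith)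
      | (rw [max_eq_left h]; nlinarith)
  have hmax : max (a^2) (τ^2) ≥ c^2/2 * (1 + τ^2) := by
    have h1 : c^2 ≤ a^2 := by
      have : c ≤ a := min_le_left _ _
      nlinarith [hc0.le]
    have h2 : c^2 * τ^2 ≤ τ^2 := by
      have hcl : c ≤ 1 := min_le_right _ _
      have hcc : c^2 ≤ 1 := by nlinarith
      nlinarith [mul_le_mul_of_nonneg_right hcc (sq_nonneg τ)]
    rcases le_total (a^2) (τ^2) with h | h
    · rw [max_eq_right h]; nlinarith
    · rw [max_eq_left h]; nlinarith
  have hprod : ‖(z+1) * z‖ ≥ c^2/2 * (1 + τ^2) := by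
    rw [norm_mul]
    have h1 : ‖z+1‖ ≥ Real.sqrt (max (a^2) (τ^2)) := by
      rw [show ‖z+1‖ = Real.sqrt (‖z+1‖^2) by
        rw [Real.sqrt_sq (norm_nonneg _)]]
      exact Real.sqrt_le_sqrt hz1abs
    have h2 : ‖z‖ ≥ Real.sqrt (max (a^2) (τ^2)) := by
      rw [show ‖z‖ = Real.sqrt (‖z‖^2) by
        rw [Real.sqrt_sq (norm_nonneg _)]]
      exact Real.sqrt_le_sqrt hzabs
    calc ‖z+1‖ * ‖z‖
        ≥ Real.sqrt (max (a^2) (τ^2)) * Real.sqrt (max (a^2) (τ^2)) :=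
          mul_le_mul h1 h2 (Real.sqrt_nonneg _) (norm_nonneg _)
      _ = max (a^2) (τ^2) := Real.mul_self_sqrt (le_max_of_le_left (sq_nonneg a))
      _ ≥ c^2/2 * (1 + τ^2) := hmax
  have hden : (0:ℝ) < c^2/2 * (1 + τ^2) := by positivity
  rw [norm_div]
  calc ‖Complex.Gamma (z+2)‖ / ‖(z+1)*z‖
      ≤ Real.Gamma (a + 2) / (c^2/2 * (1 + τ^2)) := by
        exact div_le_div₀ (Real.Gamma_pos_of_pos (by linarith)).le habs hden hprod
      _ = (2 * Real.Gamma (a + 2) / c ^ 2) * (1 + τ^2)⁻¹ := by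
        rw [div_mul_eq_div_div]
        field_simp

lemma gamma_vert_continuous {a : ℝ} (ha : 0 < a) :
    Continuous (fun τ : ℝ => Complex.Gamma (↑a + ↑τ * Complex.I)) := by
  rw [continuous_iff_continuousAt]
  intro τ
  refine (Complex.differentiableAt_Gamma _ (fun m => ?_)).continuousAt.comp
    (by fun_prop)
  intro h
  have : (↑a + ↑τ * Complex.I).re = a := by simp
  rw [h] at this
  simp at this
  have : (0:ℝ) ≤ m := Nat.cast_nonneg m
  linarith

lemma gamma_vert_integrable {a : ℝ} (ha : 0 < a) :
    Integrable (fun τ : ℝ => Complex.Gamma (↑a + ↑τ * Complex.I)) := by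
  refine Integrable.mono' (g := fun τ : ℝ =>
      (2 * Real.Gamma (a + 2) / (min a 1) ^ 2) * (1 + τ ^ 2)⁻¹)
    ?_ (gamma_vert_continuous ha).aestronglyMeasurable
    (Filter.Eventually.of_forall (fun τ => gamma_vert_bound ha τ))
  simpa [mul_comm] using integrable_inv_one_add_sq.const_mul
    (2 * Real.Gamma (a + 2) / (min a 1) ^ 2)

noncomputable def mfun (l : ℕ) (x : ℝ) : ℂ := (x:ℂ)^l * Complex.exp (-x)

lemma mfun_integrand (l : ℕ) (s : ℂ) {t : ℝ} (ht : t ∈ Ioi (0:ℝ)) :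
    (fun t : ℝ => ↑(Real.exp (-t)) * (t:ℂ) ^ (s + l - 1)) t
      = (fun t : ℝ => (t:ℂ)^(s-1) • mfun l t) t := by
  have ht0 : (t:ℂ) ≠ 0 := Complex.ofReal_ne_zero.mpr (ne_of_gt ht)
  simp only [mfun, smul_eq_mul]
  rw [show s + l - 1 = (s - 1) + l by ring, cpow_add _ _ ht0, cpow_natCast]
  push_cast
  ring

lemma mellinConvergent_mfun (l : ℕ) {s : ℂ} (hs : 0 < s.re) : MellinConvergent (mfun l) s := by
  have h : 0 < (s + l).re := by simp; positivity
  exact (Complex.GammaIntegral_convergent h).congr_fun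
    (fun t ht => mfun_integrand l s ht) measurableSet_Ioi

lemma mellin_mfun (l : ℕ) {s : ℂ} (hs : 0 < s.re) : mellin (mfun l) s = Complex.Gamma (s + l) := by
  have h : 0 < (s + l).re := by simp; positivity
  rw [Complex.Gamma_eq_integral h, Complex.GammaIntegral, mellin]
  exact (setIntegral_congr_fun measurableSet_Ioi (fun t ht => mfun_integrand l s ht)).symm

lemma mfun_inversion (l : ℕ) {σ : ℝ} (hσ : 0 < σ) {x : ℝ} (hx : 0 < x) :
    (1/(2*Real.pi)) • ∫ τ : ℝ, (x:ℂ)^(-(↑σ+↑τ*Complex.I)) •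
      Complex.Gamma ((↑σ+↑τ*Complex.I) + l) = mfun l x := by
  have hre : ∀ τ : ℝ, 0 < ((σ:ℂ) + ↑τ*Complex.I).re := fun τ => by simpa using hσ
  have hVert : Complex.VerticalIntegrable (mellin (mfun l)) σ := by
    refine (gamma_vert_integrable (a := σ + l) (by positivity)).congr
      (Filter.Eventually.of_forall (fun τ => ?_))
    simp only
    rw [mellin_mfun l (hre τ)]
    push_cast
    ring_nf
  have hcont : ContinuousAt (mfun l) x := by
    apply ContinuousAt.mul
    · exact (continuous_pow l).continuousAt.comp Complex.continuous_ofReal.continuousAt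
    · exact Complex.continuous_exp.continuousAt.comp
        (continuous_ofReal.neg.continuousAt)
  have := mellinInv_mellin_eq σ (mfun l) hx (mellinConvergent_mfun l (by simpa using hσ)) hVert hcont
  have hm : (fun τ : ℝ => (x:ℂ)^(-(↑σ+↑τ*Complex.I)) • mellin (mfun l) (↑σ+↑τ*Complex.I))
      = fun τ : ℝ => (x:ℂ)^(-(↑σ+↑τ*Complex.I)) • Complex.Gamma ((↑σ+↑τ*Complex.I)+l) :=
    funext fun τ => by rw [mellin_mfun l (hre τ)]
  rw [← this, mellinInv, hm]

lemma cpow_split (m : ℕ) {y : ℝ} (hy : 0 < y) (s : ℂ) :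
    ((Real.pi * ((m:ℝ)+1)^2 / y : ℝ) : ℂ) ^ (-s)
      = (Real.pi:ℂ)^(-s) * (1 / ((m:ℂ)+1)^(2*s)) * (y:ℂ)^s := by
  have hm1 : (0:ℝ) < (m:ℝ) + 1 := by positivity
  have h1 : (Real.pi * ((m:ℝ)+1)^2 / y : ℝ) = Real.pi * (((m:ℝ)+1)^2 * y⁻¹) := by ring
  rw [h1, Complex.ofReal_mul,
    mul_cpow_ofReal_nonneg Real.pi_pos.le (by positivity), Complex.ofReal_mul,
    mul_cpow_ofReal_nonneg (by positivity) (by positivity)]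
  have hy' : ((y⁻¹ : ℝ) : ℂ) ^ (-s) = (y:ℂ)^s := by
    rw [Complex.ofReal_inv, inv_cpow _ _ (by
      rw [Complex.arg_ofReal_of_nonneg hy.le]; exact Real.pi_ne_zero.symm),
      ← cpow_neg, neg_neg]
  have hmid : ((( (m:ℝ)+1)^2 : ℝ) : ℂ) ^ (-s) = 1 / ((m:ℂ)+1)^(2*s) := by
    have hc : ((((m:ℝ)+1)^2 : ℝ) : ℂ) = ((m:ℂ)+1)^(2:ℕ) := by push_cast; ring
    have hlog : (Complex.log ((m:ℂ)+1) * 2).im = 0 := by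
      have : ((m:ℂ)+1) = ((((m:ℝ)+1) : ℝ) : ℂ) := by push_cast; ring
      rw [this, ← Complex.ofReal_log hm1.le]
      simp
    have h2 : ((m:ℂ)+1) ^ ((2:ℂ) * (-s)) = (((m:ℂ)+1) ^ (2:ℂ)) ^ (-s) :=
      cpow_mul (-s) (by rw [hlog]; exact neg_neg_iff_pos.mpr Real.pi_pos)
        (by rw [hlog]; exact Real.pi_pos.le)
    rw [hc, ← cpow_natCast ((m:ℂ)+1) 2]
    push_cast
    rw [← h2, show (2:ℂ) * (-s) = -(2*s) by ring, cpow_neg, one_div]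
  rw [hy', hmid]; ring

lemma zeta_bound {w : ℂ} (hw : 1 < w.re) :
    ‖riemannZeta w‖ ≤ ∑' n : ℕ, ((n:ℝ)+1) ^ (-w.re) := by
  rw [zeta_eq_tsum_one_div_nat_add_one_cpow hw]
  have hnorm : ∀ n : ℕ, ‖1 / ((n:ℂ) + 1) ^ w‖ = ((n:ℝ)+1) ^ (-w.re) := by
    intro n
    have hn : (0:ℝ) < (n:ℝ) + 1 := by positivity
    have hc : ((n:ℂ) + 1) = ((((n:ℝ)+1) : ℝ) : ℂ) := by push_cast; ring
    rw [norm_div, norm_one, hc,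
      Complex.norm_cpow_eq_rpow_re_of_pos hn, Real.rpow_neg hn.le, one_div]
  have hsum : Summable fun n : ℕ => ((n:ℝ)+1) ^ (-w.re) := by
    have := Real.summable_nat_rpow (p := -w.re).mpr (by linarith)
    have h2 := (summable_nat_add_iff 1).mpr this
    exact h2.congr (fun n => by push_cast; ring_nf)
  calc ‖∑' n : ℕ, 1 / ((n:ℂ) + 1) ^ w‖ ≤ ∑' n : ℕ, ‖1 / ((n:ℂ) + 1) ^ w‖ :=
        norm_tsum_le_tsum_norm (hsum.congr (fun n => (hnorm n).symm))
    _ = ∑' n : ℕ, ((n:ℝ)+1) ^ (-w.re) := tsum_congr hnorm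

end Aux

/-- `ψ_l(y) = (1/l!) ∑_{m=1}^{∞} e^{−πm²/y} (πm²/y)^l`. -/
noncomputable def psiT (l : ℕ) (y : ℝ) : ℝ :=
  (1 / (l.factorial : ℝ)) *
    ∑' m : ℕ, Real.exp (-Real.pi * ((m : ℝ) + 1) ^ 2 / y) * (Real.pi * ((m : ℝ) + 1) ^ 2 / y) ^ l

/-- For integer `l ≥ 0`, `y > 0` and `σ > 1/2`:
`ψ_l(y) = (1/(2π l!)) ∫_ℝ π^{−(σ+iτ)} ζ(2(σ+iτ)) Γ(l+σ+iτ) y^{σ+iτ} dτ`,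
the integral being absolutely convergent. -/
theorem stmt6 (l : ℕ) (y : ℝ) (hy : 0 < y) (σ : ℝ) (hσ : 1/2 < σ) :
    Integrable (fun τ : ℝ =>
      (Real.pi : ℂ) ^ (-((σ : ℂ) + (τ : ℂ) * Complex.I)) *
        riemannZeta (2 * ((σ : ℂ) + (τ : ℂ) * Complex.I)) *
        Complex.Gamma ((l : ℂ) + (σ : ℂ) + (τ : ℂ) * Complex.I) *
        (y : ℂ) ^ ((σ : ℂ) + (τ : ℂ) * Complex.I)) ∧
    ((psiT l y : ℝ) : ℂ) = (1 / (2 * (Real.pi : ℂ) * (l.factorial : ℂ))) *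
      ∫ τ : ℝ, (Real.pi : ℂ) ^ (-((σ : ℂ) + (τ : ℂ) * Complex.I)) *
        riemannZeta (2 * ((σ : ℂ) + (τ : ℂ) * Complex.I)) *
        Complex.Gamma ((l : ℂ) + (σ : ℂ) + (τ : ℂ) * Complex.I) *
        (y : ℂ) ^ ((σ : ℂ) + (τ : ℂ) * Complex.I) := by
  have hσ0 : 0 < σ := by linarith
  set F : ℝ → ℂ := fun τ : ℝ =>
      (Real.pi : ℂ) ^ (-((σ : ℂ) + (τ : ℂ) * Complex.I)) *
        riemannZeta (2 * ((σ : ℂ) + (τ : ℂ) * Complex.I)) *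
        Complex.Gamma ((l : ℂ) + (σ : ℂ) + (τ : ℂ) * Complex.I) *
        (y : ℂ) ^ ((σ : ℂ) + (τ : ℂ) * Complex.I) with hF
  set x : ℕ → ℝ := fun m : ℕ => Real.pi * ((m:ℝ)+1)^2 / y with hxdef
  have hx : ∀ m : ℕ, 0 < x m := fun m => by
    simp only [hxdef]; positivity
  set G : ℕ → ℝ → ℂ := fun (m : ℕ) (τ : ℝ) =>
      ((x m : ℝ):ℂ)^(-((σ:ℂ)+(τ:ℂ)*Complex.I)) *
        Complex.Gamma ((↑(σ + l) : ℂ) + (τ:ℂ)*Complex.I) with hG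
  have hσl : (0:ℝ) < σ + l := by positivity
  have harg : ∀ τ : ℝ, ((σ:ℂ)+(τ:ℂ)*Complex.I) + l = (↑(σ+l):ℂ) + (τ:ℂ)*Complex.I :=
    fun τ => by push_cast; ring
  have harg2 : ∀ τ : ℝ, (l:ℂ) + σ + (τ:ℂ)*Complex.I = (↑(σ+l):ℂ) + (τ:ℂ)*Complex.I :=
    fun τ => by push_cast; ring
  have hre : ∀ τ : ℝ, (-((σ:ℂ)+(τ:ℂ)*Complex.I)).re = -σ := fun τ => by simp
  have hGnorm : ∀ (m : ℕ) (τ : ℝ), ‖G m τ‖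
      = (x m) ^ (-σ) * ‖Complex.Gamma ((↑(σ+l):ℂ) + (τ:ℂ)*Complex.I)‖ := by
    intro m τ
    simp only [hG]
    rw [norm_mul,
      Complex.norm_cpow_eq_rpow_re_of_pos (hx m), hre τ]
  have hΓint := gamma_vert_integrable (a := σ + l) hσl
  have hGcont : ∀ m : ℕ, Continuous (G m) := by
    intro m
    simp only [hG]
    apply Continuous.mul
    · exact Continuous.const_cpow (by fun_prop)
        (Or.inl (Complex.ofReal_ne_zero.mpr (hx m).ne'))
    · exact gamma_vert_continuous hσl
  have hGint : ∀ m : ℕ, Integrable (G m) := by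
    intro m
    refine Integrable.mono'
      (g := fun τ => (x m) ^ (-σ) * ‖Complex.Gamma ((↑(σ+l):ℂ) + (τ:ℂ)*Complex.I)‖)
      (hΓint.norm.const_mul _) (hGcont m).aestronglyMeasurable
      (Filter.Eventually.of_forall (fun τ => (hGnorm m τ).le))
  have hGintnorm : ∀ m : ℕ, (∫ τ : ℝ, ‖G m τ‖)
      = (x m) ^ (-σ) * ∫ τ : ℝ, ‖Complex.Gamma ((↑(σ+l):ℂ) + (τ:ℂ)*Complex.I)‖ := by
    intro m
    rw [← integral_const_mul]
    exact integral_congr_ae (Filter.Eventually.of_forall (fun τ => hGnorm m τ))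
  have hsx : Summable (fun m : ℕ => (x m) ^ (-σ)) := by
    have hbase : Summable (fun m : ℕ => ((m:ℝ)+1) ^ (-(2*σ))) := by
      have h1 := Real.summable_nat_rpow (p := -(2*σ)).mpr (by linarith)
      have h2 := (summable_nat_add_iff 1).mpr h1
      exact h2.congr (fun n => by push_cast; ring_nf)
    refine (hbase.mul_left ((Real.pi / y) ^ (-σ))).congr (fun m => ?_)
    have hm1 : (0:ℝ) < (m:ℝ)+1 := by positivity
    have hxm : x m = (Real.pi / y) * ((m:ℝ)+1)^2 := by simp only [hxdef]; ring
    rw [hxm, Real.mul_rpow (by positivity) (by positivity)]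
    congr 1
    rw [← Real.rpow_natCast ((m:ℝ)+1) 2, ← Real.rpow_mul hm1.le]
    norm_num
  have hsum' : Summable (fun m : ℕ => ∫ τ : ℝ, ‖G m τ‖) :=
    ((hsx.mul_right
      (∫ τ : ℝ, ‖Complex.Gamma ((↑(σ+l):ℂ) + (τ:ℂ)*Complex.I)‖)).congr
      (fun m => (hGintnorm m).symm))
  have hkey : (∑' m : ℕ, ∫ τ : ℝ, G m τ) = ∫ τ : ℝ, ∑' m : ℕ, G m τ :=
    integral_tsum_of_summable_integral_norm hGint hsum'
  have hzre2 : ∀ τ : ℝ, 1 < (2 * ((σ:ℂ) + (τ:ℂ)*Complex.I)).re := fun τ => by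
    simp; linarith
  have hts : ∀ τ : ℝ, (∑' m : ℕ, G m τ) = F τ := by
    intro τ
    simp only [hG, hF]
    rw [tsum_mul_right]
    have hterm : ∀ m : ℕ, ((x m : ℝ):ℂ)^(-((σ:ℂ)+(τ:ℂ)*Complex.I))
        = ((Real.pi:ℂ)^(-((σ:ℂ)+(τ:ℂ)*Complex.I)) * (y:ℂ)^((σ:ℂ)+(τ:ℂ)*Complex.I)) *
          (1 / ((m:ℂ)+1)^(2*((σ:ℂ)+(τ:ℂ)*Complex.I))) := fun m => by
      simp only [hxdef]
      rw [cpow_split m hy]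
      ring
    rw [tsum_congr hterm, tsum_mul_left,
      ← zeta_eq_tsum_one_div_nat_add_one_cpow (hzre2 τ), harg2 τ]
    ring
  set Z : ℝ := ∑' n : ℕ, ((n:ℝ)+1) ^ (-(2*σ)) with hZ
  have hFcont : Continuous F := by
    rw [continuous_iff_continuousAt]
    intro τ
    simp only [hF]
    have h1 : ContinuousAt (fun τ : ℝ => (Real.pi:ℂ)^(-((σ:ℂ)+(τ:ℂ)*Complex.I))) τ :=
      (Continuous.const_cpow (by fun_prop)
        (Or.inl (Complex.ofReal_ne_zero.mpr Real.pi_ne_zero))).continuousAt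
    have h2 : ContinuousAt (fun τ : ℝ => riemannZeta (2*((σ:ℂ)+(τ:ℂ)*Complex.I))) τ := by
      have hne : 2*((σ:ℂ)+(τ:ℂ)*Complex.I) ≠ 1 := by
        intro h
        have := congrArg Complex.re h
        simp at this; linarith
      have hcont2 : ContinuousAt (fun τ : ℝ => 2*((σ:ℂ)+(τ:ℂ)*Complex.I)) τ := by fun_prop
      have := ContinuousAt.comp (g := riemannZeta)
        (f := fun τ : ℝ => 2*((σ:ℂ)+(τ:ℂ)*Complex.I)) (x := τ)
        (differentiableAt_riemannZeta hne).continuousAt hcont2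
      exact this
    have h3 : ContinuousAt (fun τ : ℝ => Complex.Gamma ((l:ℂ) + σ + (τ:ℂ)*Complex.I)) τ := by
      have hfe : (fun τ : ℝ => Complex.Gamma ((l:ℂ) + σ + (τ:ℂ)*Complex.I))
          = fun τ : ℝ => Complex.Gamma ((↑(σ+l):ℂ) + (τ:ℂ)*Complex.I) :=
        funext fun τ => by rw [harg2 τ]
      rw [hfe]
      exact (gamma_vert_continuous hσl).continuousAt
    have h4 : ContinuousAt (fun τ : ℝ => (y:ℂ)^((σ:ℂ)+(τ:ℂ)*Complex.I)) τ :=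
      (Continuous.const_cpow (by fun_prop)
        (Or.inl (Complex.ofReal_ne_zero.mpr hy.ne'))).continuousAt
    exact ((h1.mul h2).mul h3).mul h4
  have hFbound : ∀ τ : ℝ, ‖F τ‖ ≤ (Real.pi ^ (-σ) * Z * y ^ σ) *
      ‖Complex.Gamma ((↑(σ+l):ℂ) + (τ:ℂ)*Complex.I)‖ := by
    intro τ
    simp only [hF]
    rw [harg2 τ]
    rw [norm_mul, norm_mul, norm_mul]
    have e1 : ‖(Real.pi:ℂ)^(-((σ:ℂ)+(τ:ℂ)*Complex.I))‖ = Real.pi ^ (-σ) := by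
      rw [Complex.norm_cpow_eq_rpow_re_of_pos Real.pi_pos, hre τ]
    have e2 : ‖(y:ℂ)^((σ:ℂ)+(τ:ℂ)*Complex.I)‖ = y ^ σ := by
      rw [Complex.norm_cpow_eq_rpow_re_of_pos hy]
      norm_num
    have e3 : ‖riemannZeta (2*((σ:ℂ)+(τ:ℂ)*Complex.I))‖ ≤ Z := by
      have h := zeta_bound (hzre2 τ)
      have hre2 : (2*((σ:ℂ)+(τ:ℂ)*Complex.I)).re = 2*σ := by simp
      rw [hre2] at h
      exact h
    rw [e1, e2]
    have heq1 : Real.pi ^ (-σ) * ‖riemannZeta (2*((σ:ℂ)+(τ:ℂ)*Complex.I))‖ *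
        ‖Complex.Gamma ((↑(σ+l):ℂ) + (τ:ℂ)*Complex.I)‖ * y ^ σ
        = (Real.pi ^ (-σ) * y ^ σ * ‖Complex.Gamma ((↑(σ+l):ℂ) + (τ:ℂ)*Complex.I)‖) *
          ‖riemannZeta (2*((σ:ℂ)+(τ:ℂ)*Complex.I))‖ := by ring
    have heq2 : (Real.pi ^ (-σ) * Z * y ^ σ) *
        ‖Complex.Gamma ((↑(σ+l):ℂ) + (τ:ℂ)*Complex.I)‖
        = (Real.pi ^ (-σ) * y ^ σ * ‖Complex.Gamma ((↑(σ+l):ℂ) + (τ:ℂ)*Complex.I)‖) * Z := by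
      ring
    rw [heq1, heq2]
    exact mul_le_mul_of_nonneg_left e3 (by positivity)
  have hFint : Integrable F :=
    Integrable.mono' (hΓint.norm.const_mul _) hFcont.aestronglyMeasurable
      (Filter.Eventually.of_forall hFbound)
  refine ⟨hFint, ?_⟩
  have hterm : ∀ m : ℕ, ((Real.exp (-Real.pi * ((m:ℝ)+1)^2 / y)
      * (Real.pi * ((m:ℝ)+1)^2 / y)^l : ℝ) : ℂ) = mfun l (x m) := by
    intro m
    simp only [hxdef, mfun]
    have hargeq : -Real.pi * ((m:ℝ)+1)^2 / y = -(Real.pi * ((m:ℝ)+1)^2 / y) := by ring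
    rw [hargeq]
    push_cast
    ring
  have hpsi : ((psiT l y : ℝ) : ℂ) = (1/(l.factorial:ℂ)) * ∑' m : ℕ, mfun l (x m) := by
    rw [psiT]
    push_cast
    congr 1
    refine tsum_congr (fun m => ?_)
    rw [← hterm m]
    push_cast
    ring
  have hinv : ∀ m : ℕ, mfun l (x m) = ((1/(2*Real.pi) : ℝ) : ℂ) * ∫ τ : ℝ, G m τ := by
    intro m
    rw [← mfun_inversion l hσ0 (hx m), Complex.real_smul]
    congr 1
    refine integral_congr_ae (Filter.Eventually.of_forall (fun τ => ?_))
    simp only [hG, smul_eq_mul]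
    rw [harg τ]
  have hint_eq : (∫ τ : ℝ, ∑' m : ℕ, G m τ) = ∫ τ : ℝ, F τ :=
    integral_congr_ae (Filter.Eventually.of_forall hts)
  rw [hpsi, tsum_congr hinv, tsum_mul_left, hkey, hint_eq]
  have hπ : (Real.pi:ℂ) ≠ 0 := Complex.ofReal_ne_zero.mpr Real.pi_ne_zero
  have hl : (l.factorial:ℂ) ≠ 0 := Nat.cast_ne_zero.mpr l.factorial_ne_zero
  rw [show ((1/(2*Real.pi):ℝ):ℂ) = 1/(2*(Real.pi:ℂ)) by push_cast; ring, ← mul_assoc]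
  congr 1
  field_simp
end

section
/- Let a, b, c be complex numbers with positive real parts. Then there is a positive constant M such that for every integer n ≥ 0 and every real x, |₃F₂(−n, a+ix, a−ix; a+b, a+c; 1)| ≤ M e^{M|x|} (1+n)^M. -/
open Complex Finset

/-- The Pochhammer symbol (rising factorial): `(w)_k = w (w+1) ⋯ (w+k−1)`. -/
noncomputable def poch (w : ℂ) (k : ℕ) : ℂ := ∏ i ∈ Finset.range k, (w + i)

lemma poch_zero (w : ℂ) : poch w 0 = 1 := by simp [poch]

lemma poch_succ (w : ℂ) (k : ℕ) : poch w (k+1) = poch w k * (w + k) := by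
  simp [poch, Finset.prod_range_succ]

lemma poch_ne_zero {w : ℂ} (hw : 0 < w.re) (k : ℕ) : poch w k ≠ 0 := by
  refine Finset.prod_ne_zero_iff.2 fun i _ => ?_
  intro h
  have : (w + i).re = 0 := by rw [h]; simp
  simp only [Complex.add_re, Complex.natCast_re] at this
  have : (0:ℝ) ≤ (i:ℝ) := Nat.cast_nonneg i
  linarith [Complex.add_re w i, (by simp : (w + (i:ℂ)).re = w.re + i)]

lemma Gamma_poch {w : ℂ} (hw : 0 < w.re) (k : ℕ) :
    Complex.Gamma (w + k) = poch w k * Complex.Gamma w := by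
  induction k with
  | zero => simp [poch_zero]
  | succ k ih =>
    have hne : w + k ≠ 0 := by
      intro h
      have := congrArg Complex.re h
      simp at this
      have : (0:ℝ) ≤ (k:ℝ) := Nat.cast_nonneg k
      linarith [congrArg Complex.re h, (by simp : (w + (k:ℂ)).re = w.re + k)]
    have : w + (k+1 : ℕ) = (w + k) + 1 := by push_cast; ring
    rw [this, Complex.Gamma_add_one _ hne, ih, poch_succ]
    ring

lemma poch_neg_nat (n k : ℕ) (hk : k ≤ n) :
    poch (-(n:ℂ)) k = (-1)^k * (n.choose k) * (k.factorial) := by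
  induction k with
  | zero => simp [poch_zero]
  | succ k ih =>
    have hk' : k ≤ n := Nat.le_of_succ_le hk
    rw [poch_succ, ih hk']
    have h1 : (-(n:ℂ) + k) = -((n - k : ℕ) : ℂ) := by
      push_cast [Nat.cast_sub hk']
      ring
    rw [h1]
    have h2 : (n.choose (k+1)) * (k+1) = n.choose k * (n - k) := Nat.choose_succ_right_eq n k
    have h3 : ((n.choose (k+1)) : ℂ) * (k+1) = (n.choose k : ℂ) * ((n - k : ℕ) : ℂ) := by
      exact_mod_cast congrArg (Nat.cast : ℕ → ℂ) h2
    have : (Nat.factorial (k+1) : ℂ) = (k+1) * k.factorial := by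
      push_cast [Nat.factorial_succ]; ring
    rw [this]
    rw [pow_succ]
    linear_combination ((-1:ℂ)^k * (k.factorial:ℂ)) * h3

lemma binom_sum (n : ℕ) (z : ℂ) :
    ∑ k ∈ Finset.range (n+1), poch (-(n:ℂ)) k / (k.factorial : ℂ) * z^k = (1 - z)^n := by
  have : (1 - z)^n = (-z + 1)^n := by ring_nf
  rw [this, add_pow]
  refine Finset.sum_congr rfl fun k hk => ?_
  have hk' : k ≤ n := Nat.lt_succ_iff.mp (Finset.mem_range.mp hk)
  rw [poch_neg_nat n k hk']
  have hfac : (k.factorial : ℂ) ≠ 0 := by exact_mod_cast k.factorial_ne_zero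
  field_simp
  ring

lemma beta_poch {p v : ℂ} (hp : 0 < p.re) (hv : 0 < v.re) (k : ℕ) :
    poch p k * (Complex.Gamma p * Complex.Gamma v)
      = poch (p+v) k * Complex.Gamma (p+v) * Complex.betaIntegral (p + k) v := by
  have hpk : 0 < (p + (k:ℂ)).re := by
    simp only [Complex.add_re, Complex.natCast_re]
    have : (0:ℝ) ≤ (k:ℝ) := Nat.cast_nonneg k
    linarith
  have h1 := Complex.Gamma_mul_Gamma_eq_betaIntegral hpk hv
  have h2 : Complex.Gamma (p + k) = poch p k * Complex.Gamma p := Gamma_poch hp k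
  have h3 : p + (k:ℂ) + v = (p + v) + k := by ring
  have h4 : Complex.Gamma ((p + v) + k) = poch (p+v) k * Complex.Gamma (p+v) :=
    Gamma_poch (by simp only [Complex.add_re]; linarith) k
  rw [h2, h3, h4] at h1
  linear_combination h1

lemma inner_swap {q w : ℂ} (hq : 0 < q.re) (hw : 0 < w.re) (n : ℕ) (z : ℂ) :
    ∑ k ∈ Finset.range (n+1),
        poch (-(n:ℂ)) k / (k.factorial : ℂ) * z^k * Complex.betaIntegral (q + k) w
      = ∫ s in (0:ℝ)..1, (s:ℂ)^(q-1) * (1-(s:ℂ))^(w-1) * (1 - z * s)^n := by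
  have hqk : ∀ k : ℕ, 0 < (q + (k:ℂ)).re := by
    intro k
    simp only [Complex.add_re, Complex.natCast_re]
    have : (0:ℝ) ≤ (k:ℝ) := Nat.cast_nonneg k
    linarith
  have h1 : ∀ k ∈ Finset.range (n+1),
      poch (-(n:ℂ)) k / (k.factorial : ℂ) * z^k * Complex.betaIntegral (q + k) w
        = ∫ s in (0:ℝ)..1, (poch (-(n:ℂ)) k / (k.factorial : ℂ) * z^k) *
            ((s:ℂ)^(q + k - 1) * (1-(s:ℂ))^(w-1)) := by
    intro k _
    rw [intervalIntegral.integral_const_mul, Complex.betaIntegral]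
  rw [Finset.sum_congr rfl h1, ← intervalIntegral.integral_finset_sum]
  · apply intervalIntegral.integral_congr_ae
    filter_upwards with s hs
    rw [Set.uIoc_of_le (zero_le_one)] at hs
    have hs0 : (0:ℝ) < s := hs.1
    have hsne : (s:ℂ) ≠ 0 := by exact_mod_cast ne_of_gt hs0
    have key : ∀ k : ℕ, (s:ℂ)^(q + (k:ℂ) - 1) = (s:ℂ)^(q-1) * (s:ℂ)^k := by
      intro k
      rw [show q + (k:ℂ) - 1 = (q - 1) + (k:ℂ) by ring, Complex.cpow_add _ _ hsne,
        Complex.cpow_natCast]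
    calc ∑ k ∈ Finset.range (n+1),
          (poch (-(n:ℂ)) k / (k.factorial : ℂ) * z^k) * ((s:ℂ)^(q + k - 1) * (1-(s:ℂ))^(w-1))
        = (∑ k ∈ Finset.range (n+1),
            poch (-(n:ℂ)) k / (k.factorial : ℂ) * (z * s)^k) *
              ((s:ℂ)^(q-1) * (1-(s:ℂ))^(w-1)) := by
          rw [Finset.sum_mul]
          refine Finset.sum_congr rfl fun k _ => ?_
          rw [key k, mul_pow]
          ring
      _ = (s:ℂ)^(q-1) * (1-(s:ℂ))^(w-1) * (1 - z * s)^n := by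
          rw [binom_sum]; ring
  · intro k _
    exact (Complex.betaIntegral_convergent (hqk k) hw).const_mul _

/-- The terminating hypergeometric sum
`₃F₂(−n, p, q; r, s; 1) = ∑_{k=0}^n ((−n)_k (p)_k (q)_k)/((r)_k (s)_k k!)`. -/
noncomputable def F32 (n : ℕ) (p q r s : ℂ) : ℂ :=
  ∑ k ∈ Finset.range (n + 1),
    poch (-(n : ℂ)) k * poch p k * poch q k / (poch r k * poch s k * (k.factorial : ℂ))

lemma key_identity {p q v w : ℂ} (hp : 0 < p.re) (hq : 0 < q.re) (hv : 0 < v.re)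
    (hw : 0 < w.re) (n : ℕ) :
    F32 n p q (p+v) (q+w) *
        (Complex.Gamma p * Complex.Gamma v * Complex.Gamma q * Complex.Gamma w)
      = Complex.Gamma (p+v) * Complex.Gamma (q+w) *
        ∫ t in (0:ℝ)..1, (t:ℂ)^(p-1) * (1-(t:ℂ))^(v-1) *
          ∫ s in (0:ℝ)..1, (s:ℂ)^(q-1) * (1-(s:ℂ))^(w-1) * (1 - (t:ℂ) * s)^n := by
  have hpv : 0 < (p+v).re := by simp only [Complex.add_re]; linarith
  have hqw : 0 < (q+w).re := by simp only [Complex.add_re]; linarith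
  have hpk : ∀ k : ℕ, 0 < (p + (k:ℂ)).re := by
    intro k
    simp only [Complex.add_re, Complex.natCast_re]
    have : (0:ℝ) ≤ (k:ℝ) := Nat.cast_nonneg k
    linarith
  -- Step 1: termwise beta representation
  have step1 : F32 n p q (p+v) (q+w) *
      (Complex.Gamma p * Complex.Gamma v * Complex.Gamma q * Complex.Gamma w)
      = Complex.Gamma (p+v) * Complex.Gamma (q+w) *
        ∑ k ∈ Finset.range (n+1), poch (-(n:ℂ)) k / (k.factorial : ℂ) *
          Complex.betaIntegral (p + k) v * Complex.betaIntegral (q + k) w := by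
    rw [F32, Finset.sum_mul, Finset.mul_sum]
    refine Finset.sum_congr rfl fun k _ => ?_
    have e1 := beta_poch hp hv k
    have e2 := beta_poch hq hw k
    have n1 : poch (p+v) k ≠ 0 := poch_ne_zero hpv k
    have n2 : poch (q+w) k ≠ 0 := poch_ne_zero hqw k
    have nf : (k.factorial : ℂ) ≠ 0 := by exact_mod_cast k.factorial_ne_zero
    have e12 : (poch p k * (Complex.Gamma p * Complex.Gamma v)) *
        (poch q k * (Complex.Gamma q * Complex.Gamma w))
        = (poch (p+v) k * Complex.Gamma (p+v) * Complex.betaIntegral (p + k) v) *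
          (poch (q+w) k * Complex.Gamma (q+w) * Complex.betaIntegral (q + k) w) := by
      rw [e1, e2]
    field_simp
    linear_combination (poch (-(n:ℂ)) k) * e12
  rw [step1]
  congr 1
  -- Step 2: swap sum and outer integral
  have h1 : ∀ k ∈ Finset.range (n+1),
      poch (-(n:ℂ)) k / (k.factorial : ℂ) * Complex.betaIntegral (p + k) v *
          Complex.betaIntegral (q + k) w
        = ∫ t in (0:ℝ)..1, (poch (-(n:ℂ)) k / (k.factorial : ℂ) *
            Complex.betaIntegral (q + k) w) * ((t:ℂ)^(p + k - 1) * (1-(t:ℂ))^(v-1)) := by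
    intro k _
    rw [intervalIntegral.integral_const_mul, Complex.betaIntegral]
    ring
  rw [Finset.sum_congr rfl h1, ← intervalIntegral.integral_finset_sum]
  · apply intervalIntegral.integral_congr_ae
    filter_upwards with t ht
    rw [Set.uIoc_of_le (zero_le_one)] at ht
    have ht0 : (0:ℝ) < t := ht.1
    have htne : (t:ℂ) ≠ 0 := by exact_mod_cast ne_of_gt ht0
    have key : ∀ k : ℕ, (t:ℂ)^(p + (k:ℂ) - 1) = (t:ℂ)^(p-1) * (t:ℂ)^k := by
      intro k
      rw [show p + (k:ℂ) - 1 = (p - 1) + (k:ℂ) by ring, Complex.cpow_add _ _ htne,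
        Complex.cpow_natCast]
    calc ∑ k ∈ Finset.range (n+1),
          (poch (-(n:ℂ)) k / (k.factorial : ℂ) * Complex.betaIntegral (q + k) w) *
            ((t:ℂ)^(p + k - 1) * (1-(t:ℂ))^(v-1))
        = ((t:ℂ)^(p-1) * (1-(t:ℂ))^(v-1)) *
            ∑ k ∈ Finset.range (n+1), poch (-(n:ℂ)) k / (k.factorial : ℂ) * ((t:ℂ))^k *
              Complex.betaIntegral (q + k) w := by
          rw [Finset.mul_sum]
          refine Finset.sum_congr rfl fun k _ => ?_
          rw [key k]
          ring
      _ = (t:ℂ)^(p-1) * (1-(t:ℂ))^(v-1) *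
            ∫ s in (0:ℝ)..1, (s:ℂ)^(q-1) * (1-(s:ℂ))^(w-1) * (1 - (t:ℂ) * s)^n := by
          rw [inner_swap hq hw]
  · intro k _
    exact (Complex.betaIntegral_convergent (hpk k) hv).const_mul _

open MeasureTheory

lemma ae_mem_Ioo : ∀ᵐ (s:ℝ) ∂(volume.restrict (Set.uIoc (0:ℝ) 1)), s ∈ Set.Ioo (0:ℝ) 1 := by
  have hne : ∀ᵐ (s:ℝ) ∂volume, s ≠ 1 := by
    rw [ae_iff]
    have : {s : ℝ | ¬ s ≠ 1} = {1} := by ext s; simp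
    rw [this]
    exact measure_singleton 1
  filter_upwards [ae_restrict_mem measurableSet_uIoc, ae_restrict_of_ae hne] with s hs hne1
  rw [Set.uIoc_of_le (zero_le_one)] at hs
  exact ⟨hs.1, lt_of_le_of_ne hs.2 hne1⟩

lemma norm_w_eq {u : ℂ} {s : ℝ} (hs : s ∈ Set.Ioo (0:ℝ) 1) (v : ℂ) :
    ‖(s:ℂ)^(u-1) * (1-(s:ℂ))^(v-1)‖ = s^(u.re-1) * (1-s)^(v.re-1) := by
  have h1 : (1 - (s:ℂ)) = ((1 - s : ℝ) : ℂ) := by push_cast; ring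
  rw [norm_mul, h1,
    Complex.norm_cpow_eq_rpow_re_of_pos hs.1, Complex.norm_cpow_eq_rpow_re_of_pos (by linarith [hs.2])]
  simp [Complex.sub_re]

set_option maxHeartbeats 1000000 in
lemma double_bound {p q v w : ℂ} (hp : 0 < p.re) (hq : 0 < q.re) (hv : 0 < v.re)
    (hw : 0 < w.re) (n : ℕ) :
    ‖∫ t in (0:ℝ)..1, (t:ℂ)^(p-1) * (1-(t:ℂ))^(v-1) *
        ∫ s in (0:ℝ)..1, (s:ℂ)^(q-1) * (1-(s:ℂ))^(w-1) * (1 - (t:ℂ) * s)^n‖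
      ≤ (∫ t in (0:ℝ)..1, ‖(t:ℂ)^(((p.re:ℝ):ℂ)-1) * (1-(t:ℂ))^(((v.re:ℝ):ℂ)-1)‖) *
        (∫ s in (0:ℝ)..1, ‖(s:ℂ)^(((q.re:ℝ):ℂ)-1) * (1-(s:ℂ))^(((w.re:ℝ):ℂ)-1)‖) := by
  have hpre : 0 < ((p.re:ℝ):ℂ).re := by simpa using hp
  have hqre : 0 < ((q.re:ℝ):ℂ).re := by simpa using hq
  have hvre : 0 < ((v.re:ℝ):ℂ).re := by simpa using hv
  have hwre : 0 < ((w.re:ℝ):ℂ).re := by simpa using hw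
  set Cq : ℝ := ∫ s in (0:ℝ)..1, ‖(s:ℂ)^(((q.re:ℝ):ℂ)-1) * (1-(s:ℂ))^(((w.re:ℝ):ℂ)-1)‖ with hCq
  have hq_int := (Complex.betaIntegral_convergent hqre hwre).norm
  have hp_int := (Complex.betaIntegral_convergent hpre hvre).norm
  have hCq0 : 0 ≤ Cq := intervalIntegral.integral_nonneg zero_le_one (fun s _ => norm_nonneg _)
  -- inner bound
  have inner_bd : ∀ t : ℝ, t ∈ Set.Ioo (0:ℝ) 1 →
      ‖∫ s in (0:ℝ)..1, (s:ℂ)^(q-1) * (1-(s:ℂ))^(w-1) * (1 - (t:ℂ) * s)^n‖ ≤ Cq := by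
    intro t ht
    have := intervalIntegral.norm_integral_le_abs_of_norm_le (μ := volume) (a := (0:ℝ)) (b := 1)
      (f := fun s => (s:ℂ)^(q-1) * (1-(s:ℂ))^(w-1) * (1 - (t:ℂ) * s)^n)
      (g := fun s => ‖(s:ℂ)^(((q.re:ℝ):ℂ)-1) * (1-(s:ℂ))^(((w.re:ℝ):ℂ)-1)‖)
      ?_ hq_int
    · rwa [_root_.abs_of_nonneg hCq0] at this
    · filter_upwards [ae_mem_Ioo] with s hs
      have h1 : ‖(s:ℂ)^(q-1) * (1-(s:ℂ))^(w-1)‖ = s^(q.re-1) * (1-s)^(w.re-1) := norm_w_eq hs w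
      have h2 : ‖(s:ℂ)^(((q.re:ℝ):ℂ)-1) * (1-(s:ℂ))^(((w.re:ℝ):ℂ)-1)‖
          = s^(q.re-1) * (1-s)^(w.re-1) := by
        have := norm_w_eq (u := ((q.re:ℝ):ℂ)) hs ((w.re:ℝ):ℂ)
        simpa using this
      have h3 : ‖(1 - (t:ℂ) * s)^n‖ ≤ 1 := by
        have he : (1 - (t:ℂ) * s) = ((1 - t * s : ℝ) : ℂ) := by push_cast; ring
        rw [norm_pow, he, Complex.norm_real]
        have h4 : 0 ≤ t * s := mul_nonneg ht.1.le hs.1.le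
        have h5 : t * s ≤ 1 := by nlinarith [ht.2, hs.2, ht.1, hs.1]
        have : |1 - t * s| ≤ 1 := by rw [_root_.abs_of_nonneg (by linarith)]; linarith
        calc |1 - t*s|^n ≤ 1^n := pow_le_pow_left₀ (abs_nonneg _) this n
          _ = 1 := one_pow n
      calc ‖(s:ℂ)^(q-1) * (1-(s:ℂ))^(w-1) * (1 - (t:ℂ) * s)^n‖
          = ‖(s:ℂ)^(q-1) * (1-(s:ℂ))^(w-1)‖ * ‖(1 - (t:ℂ) * s)^n‖ := norm_mul _ _
        _ ≤ (s^(q.re-1) * (1-s)^(w.re-1)) * 1 := by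
            rw [h1]
            refine mul_le_mul_of_nonneg_left h3 (mul_nonneg (Real.rpow_nonneg hs.1.le _)
              (Real.rpow_nonneg (by linarith [hs.2] : (0:ℝ) ≤ 1-s) _))
        _ = ‖(s:ℂ)^(((q.re:ℝ):ℂ)-1) * (1-(s:ℂ))^(((w.re:ℝ):ℂ)-1)‖ := by rw [h2]; ring
  -- outer bound
  have := intervalIntegral.norm_integral_le_abs_of_norm_le (μ := volume) (a := (0:ℝ)) (b := 1)
    (f := fun t => (t:ℂ)^(p-1) * (1-(t:ℂ))^(v-1) *
        ∫ s in (0:ℝ)..1, (s:ℂ)^(q-1) * (1-(s:ℂ))^(w-1) * (1 - (t:ℂ) * s)^n)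
    (g := fun t => ‖(t:ℂ)^(((p.re:ℝ):ℂ)-1) * (1-(t:ℂ))^(((v.re:ℝ):ℂ)-1)‖ * Cq)
    ?_ (hp_int.mul_const _)
  · rw [intervalIntegral.integral_mul_const, _root_.abs_of_nonneg] at this
    · exact this
    · exact mul_nonneg (intervalIntegral.integral_nonneg zero_le_one (fun t _ => norm_nonneg _)) hCq0
  · filter_upwards [ae_mem_Ioo] with t ht
    have h1 : ‖(t:ℂ)^(p-1) * (1-(t:ℂ))^(v-1)‖ = t^(p.re-1) * (1-t)^(v.re-1) := norm_w_eq ht v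
    have h2 : ‖(t:ℂ)^(((p.re:ℝ):ℂ)-1) * (1-(t:ℂ))^(((v.re:ℝ):ℂ)-1)‖
        = t^(p.re-1) * (1-t)^(v.re-1) := by
      have := norm_w_eq (u := ((p.re:ℝ):ℂ)) ht ((v.re:ℝ):ℂ)
      simpa using this
    rw [norm_mul, h1, h2]
    refine mul_le_mul_of_nonneg_left (inner_bd t ht) (mul_nonneg (Real.rpow_nonneg ht.1.le _)
      (Real.rpow_nonneg (by linarith [ht.2] : (0:ℝ) ≤ 1-t) _))


lemma abs_Gamma_le_s9 {w : ℂ} (hw : 0 < w.re) : ‖Complex.Gamma w‖ ≤ Real.Gamma w.re := by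
  rw [Complex.Gamma_eq_integral hw, Real.Gamma_eq_integral hw, Complex.GammaIntegral]
  refine (MeasureTheory.norm_integral_le_integral_norm _).trans_eq ?_
  refine MeasureTheory.setIntegral_congr_fun measurableSet_Ioi fun x hx => ?_
  have hx0 : (0:ℝ) < x := hx
  rw [norm_mul, Complex.norm_real, Real.norm_eq_abs, _root_.abs_of_nonneg (Real.exp_nonneg _),
    Complex.norm_cpow_eq_rpow_re_of_pos hx0]
  simp [Complex.sub_re]

lemma abs_sin_le (z : ℂ) : ‖Complex.sin z‖ ≤ Real.exp |z.im| := by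
  rw [Complex.sin]
  calc ‖(Complex.exp (-z * I) - Complex.exp (z * I)) * I / 2‖
      = ‖Complex.exp (-z * I) - Complex.exp (z * I)‖ / 2 := by
        rw [norm_div, norm_mul]; simp
    _ ≤ (‖Complex.exp (-z * I)‖ + ‖Complex.exp (z * I)‖) / 2 := by
        gcongr; exact (norm_sub_le _ _)
    _ ≤ Real.exp |z.im| := by
        rw [Complex.norm_exp, Complex.norm_exp]
        have h1 : (-z * I).re = z.im := by simp [Complex.mul_re]
        have h2 : (z * I).re = -z.im := by simp [Complex.mul_re]
        rw [h1, h2]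
        have := abs_nonneg z.im
        have e1 : Real.exp z.im ≤ Real.exp |z.im| := Real.exp_le_exp.2 (le_abs_self _)
        have e2 : Real.exp (-z.im) ≤ Real.exp |z.im| := Real.exp_le_exp.2 (neg_le_abs _)
        linarith

lemma gamma_min (σ : ℝ) (hσ : 0 < σ) :
    ∃ m > 0, ∀ y : ℝ, |y| ≤ 1 → m ≤ ‖Complex.Gamma ((σ:ℂ) + y * I)‖ := by
  set f : ℝ → ℝ := fun y => ‖Complex.Gamma ((σ:ℂ) + y * I)‖ with hf
  have hre : ∀ y : ℝ, ((σ:ℂ) + y * I).re = σ := by intro y; simp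
  have hne : ∀ y : ℝ, ∀ m : ℕ, (σ:ℂ) + y * I ≠ -m := by
    intro y m h
    have := congrArg Complex.re h
    rw [hre y] at this
    simp at this
    have : (0:ℝ) ≤ (m:ℝ) := Nat.cast_nonneg m
    linarith [congrArg Complex.re h, hre y]
  have hg : Continuous fun y : ℝ => (σ:ℂ) + y * I := by continuity
  have hcont : ContinuousOn f (Set.Icc (-1:ℝ) 1) := by
    intro y _
    apply ContinuousAt.continuousWithinAt
    have hΓ : ContinuousAt Complex.Gamma ((σ:ℂ) + y * I) :=
      (Complex.differentiableAt_Gamma _ (hne y)).continuousAt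
    have h1 : ContinuousAt (fun y : ℝ => Complex.Gamma ((σ:ℂ) + y * I)) y :=
      ContinuousAt.comp (f := fun y : ℝ => (σ:ℂ) + y * I) (g := Complex.Gamma) hΓ
        hg.continuousAt
    exact h1.norm
  obtain ⟨y₀, hy₀, hmin⟩ := isCompact_Icc.exists_isMinOn ⟨0, by norm_num⟩ hcont
  refine ⟨f y₀, ?_, fun y hy => hmin (by rcases abs_le.mp hy with ⟨h1, h2⟩; exact ⟨h1, h2⟩)⟩
  have : Complex.Gamma ((σ:ℂ) + y₀ * I) ≠ 0 :=
    Complex.Gamma_ne_zero_of_re_pos (by rw [hre]; exact hσ)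
  simpa [hf] using norm_pos_iff.mpr this

lemma gamma_lower_base {σ : ℝ} (hσ : 0 < σ) (hσ2 : σ < 2) :
    ∃ c > 0, ∀ z : ℂ, z.re = σ → c * Real.exp (-4 * |z.im|) ≤ ‖Complex.Gamma z‖ := by
  obtain ⟨m, hm, hmin⟩ := gamma_min σ hσ
  have hG2 : 0 < Real.Gamma (2 - σ) := Real.Gamma_pos_of_pos (by linarith)
  refine ⟨min m (Real.pi / Real.Gamma (2 - σ)), lt_min hm (by positivity), fun z hz => ?_⟩
  by_cases him : |z.im| ≤ 1
  · have h1 : m ≤ ‖Complex.Gamma z‖ := by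
      have h := hmin z.im him
      have hzeq : (σ:ℂ) + z.im * I = z := by rw [← hz]; exact Complex.re_add_im z
      rwa [hzeq] at h
    have h2 : Real.exp (-4 * |z.im|) ≤ 1 :=
      Real.exp_le_one_iff.2 (by nlinarith [abs_nonneg z.im])
    calc min m (Real.pi / Real.Gamma (2 - σ)) * Real.exp (-4 * |z.im|)
        ≤ m * 1 := by
          apply mul_le_mul (min_le_left _ _) h2 (Real.exp_nonneg _) hm.le
      _ = m := mul_one m
      _ ≤ _ := h1
  · push_neg at him
    have him0 : z.im ≠ 0 := by intro h; rw [h] at him; simp at him; linarith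
    have hzne1 : (1:ℂ) - z ≠ 0 := by
      intro h
      have := congrArg Complex.im h
      simp at this
      exact him0 this
    have hsin : Complex.sin (↑Real.pi * z) ≠ 0 := by
      rw [Complex.sin_ne_zero_iff]
      intro k h
      have hπ : (Real.pi : ℂ) ≠ 0 := by exact_mod_cast Real.pi_ne_zero
      have hzk : z = (k:ℂ) := by
        have h2 : (Real.pi:ℂ) * z = (Real.pi:ℂ) * (k:ℂ) := by rw [h]; ring
        exact mul_left_cancel₀ hπ h2
      have : z.im = 0 := by rw [hzk]; simp [Complex.intCast_im]
      exact him0 this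
    have hid : Complex.Gamma z * Complex.Gamma (2 - z)
        = (1 - z) * (↑Real.pi / Complex.sin (↑Real.pi * z)) := by
      have h1 := Complex.Gamma_mul_Gamma_one_sub z
      have h2 : Complex.Gamma (2 - z) = (1 - z) * Complex.Gamma (1 - z) := by
        rw [show (2:ℂ) - z = (1 - z) + 1 by ring, Complex.Gamma_add_one _ hzne1]
      rw [h2]
      linear_combination (1 - z) * h1
    have habs : ‖Complex.Gamma z‖ * ‖Complex.Gamma (2 - z)‖
        = ‖1 - z‖ * (Real.pi / ‖Complex.sin (↑Real.pi * z)‖) := by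
      have := congrArg (norm : ℂ → ℝ) hid
      rwa [norm_mul, norm_mul, norm_div, Complex.norm_real, Real.norm_eq_abs,
        _root_.abs_of_nonneg Real.pi_pos.le] at this
    have hB : ‖Complex.Gamma (2 - z)‖ ≤ Real.Gamma (2 - σ) := by
      have : (2 - z).re = 2 - σ := by simp [hz]
      have h := abs_Gamma_le_s9 (w := 2 - z) (by rw [this]; linarith)
      rwa [this] at h
    have hs : ‖Complex.sin (↑Real.pi * z)‖ ≤ Real.exp (Real.pi * |z.im|) := by
      have h := abs_sin_le (↑Real.pi * z)
      have : (↑Real.pi * z).im = Real.pi * z.im := by simp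
      rwa [this, abs_mul, _root_.abs_of_nonneg Real.pi_pos.le] at h
    have h1z : (1:ℝ) ≤ ‖1 - z‖ := by
      have := Complex.abs_im_le_norm (1 - z)
      have h2 : (1 - z).im = -z.im := by simp
      rw [h2, abs_neg] at this
      linarith
    -- A * B * |sin| = |1-z| * π ≥ π
    have hsin0 : 0 < ‖Complex.sin (↑Real.pi * z)‖ := norm_pos_iff.mpr hsin
    have key : Real.pi ≤ ‖Complex.Gamma z‖ * (Real.Gamma (2 - σ) *
        Real.exp (Real.pi * |z.im|)) := by
      have e1 : ‖Complex.Gamma z‖ * ‖Complex.Gamma (2 - z)‖ *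
          ‖Complex.sin (↑Real.pi * z)‖ = ‖1 - z‖ * Real.pi := by
        rw [habs, mul_assoc, div_mul_cancel₀ _ hsin0.ne']
      have e2 : Real.pi ≤ ‖1 - z‖ * Real.pi := by nlinarith [Real.pi_pos]
      calc Real.pi ≤ ‖1 - z‖ * Real.pi := e2
        _ = ‖Complex.Gamma z‖ * (‖Complex.Gamma (2 - z)‖ *
            ‖Complex.sin (↑Real.pi * z)‖) := by rw [← e1]; ring
        _ ≤ ‖Complex.Gamma z‖ * (Real.Gamma (2 - σ) *
            Real.exp (Real.pi * |z.im|)) := by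
          apply mul_le_mul_of_nonneg_left _ (norm_nonneg _)
          exact mul_le_mul hB hs hsin0.le hG2.le
    have hexp : 0 < Real.Gamma (2 - σ) * Real.exp (Real.pi * |z.im|) := by positivity
    have hA : Real.pi / (Real.Gamma (2 - σ) * Real.exp (Real.pi * |z.im|))
        ≤ ‖Complex.Gamma z‖ := by
      rw [div_le_iff₀ hexp]; linarith [key]
    calc min m (Real.pi / Real.Gamma (2 - σ)) * Real.exp (-4 * |z.im|)
        ≤ (Real.pi / Real.Gamma (2 - σ)) * Real.exp (-Real.pi * |z.im|) := by
          apply mul_le_mul (min_le_right _ _) _ (Real.exp_nonneg _) (by positivity)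
          apply Real.exp_le_exp.2
          nlinarith [abs_nonneg z.im, Real.pi_le_four]
      _ = Real.pi / (Real.Gamma (2 - σ) * Real.exp (Real.pi * |z.im|)) := by
          rw [neg_mul, Real.exp_neg]
          rw [eq_div_iff (by positivity)]
          field_simp
      _ ≤ _ := hA

lemma gamma_lower (σ : ℝ) (hσ : 0 < σ) :
    ∃ c > 0, ∀ z : ℂ, z.re = σ → c * Real.exp (-4 * |z.im|) ≤ ‖Complex.Gamma z‖ := by
  suffices H : ∀ n : ℕ, ∀ σ : ℝ, 0 < σ → σ < n + 2 →
      ∃ c > 0, ∀ z : ℂ, z.re = σ → c * Real.exp (-4 * |z.im|)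
        ≤ ‖Complex.Gamma z‖ by
    refine H ⌈σ⌉₊ σ hσ ?_
    have := Nat.le_ceil σ
    linarith [Nat.le_ceil σ, (by norm_num : (0:ℝ) < 2)]
  intro n
  induction n with
  | zero => intro σ hσ hσ2; exact gamma_lower_base hσ (by exact_mod_cast (by simpa using hσ2))
  | succ n ih =>
    intro σ hσ hσ2
    by_cases hcase : σ < n + 2
    · exact ih σ hσ hcase
    · push_neg at hcase
      have hσ1 : 1 ≤ σ - 1 := by
        have : (1:ℝ) ≤ n + 1 := by
          have : (0:ℝ) ≤ n := Nat.cast_nonneg n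
          linarith
        linarith
      obtain ⟨c, hc, hlow⟩ := ih (σ - 1) (by linarith) (by push_cast at hσ2 ⊢; linarith)
      refine ⟨(σ - 1) * c, by nlinarith, fun z hz => ?_⟩
      have hz1ne : z - 1 ≠ 0 := by
        intro h
        have := congrArg Complex.re h
        simp [hz] at this
        linarith
      have hrec : Complex.Gamma z = (z - 1) * Complex.Gamma (z - 1) := by
        have := Complex.Gamma_add_one _ hz1ne
        rw [show (z - 1) + 1 = z by ring] at this
        rw [this]
      have hre : (z - 1).re = σ - 1 := by simp [hz]
      have him : (z - 1).im = z.im := by simp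
      have h1 := hlow (z - 1) hre
      rw [him] at h1
      have h2 : σ - 1 ≤ ‖z - 1‖ := by
        have := Complex.re_le_norm (z - 1)
        linarith [hre ▸ this]
      calc (σ - 1) * c * Real.exp (-4 * |z.im|)
          = (σ - 1) * (c * Real.exp (-4 * |z.im|)) := by ring
        _ ≤ ‖z - 1‖ * ‖Complex.Gamma (z - 1)‖ := by
            apply mul_le_mul h2 h1 (by positivity) (norm_nonneg _)
        _ = ‖Complex.Gamma z‖ := by rw [hrec, norm_mul]


lemma lower_shift {cst G u y : ℝ} (hcst : 0 < cst)
    (h : cst * Real.exp (-4 * |u + y|) ≤ G) :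
    cst * Real.exp (-4 * |u|) * Real.exp (-4 * |y|) ≤ G := by
  refine le_trans ?_ h
  rw [mul_assoc, ← Real.exp_add]
  apply mul_le_mul_of_nonneg_left _ hcst.le
  apply Real.exp_le_exp.2
  have := abs_add_le u y
  linarith

set_option maxHeartbeats 2000000 in
/-- If `a, b, c` have positive real parts, then there is `M > 0` such that for every
integer `n ≥ 0` and real `x`:
`|₃F₂(−n, a+ix, a−ix; a+b, a+c; 1)| ≤ M e^{M|x|} (1+n)^M`. -/
theorem stmt9 (a b c : ℂ) (ha : 0 < a.re) (hb : 0 < b.re) (hc : 0 < c.re) :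
    ∃ M > (0 : ℝ), ∀ (n : ℕ) (x : ℝ),
      ‖F32 n (a + Complex.I * x) (a - Complex.I * x) (a + b) (a + c)‖
        ≤ M * Real.exp (M * |x|) * ((1 : ℝ) + n) ^ M := by
  obtain ⟨ca, hca, hla⟩ := gamma_lower a.re ha
  obtain ⟨cb, hcb, hlb⟩ := gamma_lower b.re hb
  obtain ⟨cc0, hcc, hlc⟩ := gamma_lower c.re hc
  obtain ⟨C1, hC1⟩ : ∃ r : ℝ, r = ∫ t in (0:ℝ)..1,
      ‖(t:ℂ)^(((a.re:ℝ):ℂ)-1) * (1-(t:ℂ))^(((b.re:ℝ):ℂ)-1)‖ := ⟨_, rfl⟩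
  obtain ⟨C2, hC2⟩ : ∃ r : ℝ, r = ∫ s in (0:ℝ)..1,
      ‖(s:ℂ)^(((a.re:ℝ):ℂ)-1) * (1-(s:ℂ))^(((c.re:ℝ):ℂ)-1)‖ := ⟨_, rfl⟩
  have hC1n : 0 ≤ C1 := by
    rw [hC1]; exact intervalIntegral.integral_nonneg zero_le_one (fun _ _ => norm_nonneg _)
  have hC2n : 0 ≤ C2 := by
    rw [hC2]; exact intervalIntegral.integral_nonneg zero_le_one (fun _ _ => norm_nonneg _)
  set Ea : ℝ := Real.exp (-4 * |a.im|) with hEa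
  set Eb : ℝ := Real.exp (-4 * |b.im|) with hEb
  set Ec : ℝ := Real.exp (-4 * |c.im|) with hEc
  set K0 : ℝ := (ca * Ea) * (cb * Eb) * (ca * Ea) * (cc0 * Ec) with hK0def
  have hK0 : 0 < K0 := by positivity
  set Gab : ℝ := ‖Complex.Gamma (a+b)‖ with hGab
  set Gac : ℝ := ‖Complex.Gamma (a+c)‖ with hGac
  have hGabn : 0 ≤ Gab := norm_nonneg _
  have hGacn : 0 ≤ Gac := norm_nonneg _
  set K2 : ℝ := Gab * Gac * (C1 * C2) with hK2def
  have hK2n : 0 ≤ K2 := by positivity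
  obtain ⟨M, hMdef⟩ : ∃ r : ℝ, r = K2 / K0 + 17 := ⟨_, rfl⟩
  have hdivn : 0 ≤ K2 / K0 := div_nonneg hK2n hK0.le
  have hMpos : 0 < M := by rw [hMdef]; linarith
  have hM17 : 17 ≤ M := by rw [hMdef]; linarith
  refine ⟨M, hMpos, fun n x => ?_⟩
  have hp : 0 < (a + Complex.I * (x:ℂ)).re := by simpa using ha
  have hq : 0 < (a - Complex.I * (x:ℂ)).re := by simpa using ha
  have hv : 0 < (b - Complex.I * (x:ℂ)).re := by simpa using hb
  have hw : 0 < (c + Complex.I * (x:ℂ)).re := by simpa using hc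
  have hkey := key_identity hp hq hv hw n
  rw [show a + Complex.I * (x:ℂ) + (b - Complex.I * (x:ℂ)) = a + b by ring,
    show a - Complex.I * (x:ℂ) + (c + Complex.I * (x:ℂ)) = a + c by ring] at hkey
  have heq := congrArg (norm : ℂ → ℝ) hkey
  simp only [norm_mul] at heq
  have hJ := double_bound hp hq hv hw n
  rw [show (a + Complex.I * (x:ℂ)).re = a.re by simp,
    show (a - Complex.I * (x:ℂ)).re = a.re by simp,
    show (b - Complex.I * (x:ℂ)).re = b.re by simp,
    show (c + Complex.I * (x:ℂ)).re = c.re by simp, ← hC1, ← hC2] at hJ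
  -- lower bounds for the four Gamma factors
  have lbp : ca * Ea * Real.exp (-4 * |x|)
      ≤ ‖Complex.Gamma (a + Complex.I * (x:ℂ))‖ := by
    have h := hla (a + Complex.I * (x:ℂ)) (by simp)
    rw [show (a + Complex.I * (x:ℂ)).im = a.im + x by simp] at h
    exact lower_shift hca h
  have lbq : ca * Ea * Real.exp (-4 * |x|)
      ≤ ‖Complex.Gamma (a - Complex.I * (x:ℂ))‖ := by
    have h := hla (a - Complex.I * (x:ℂ)) (by simp)
    rw [show (a - Complex.I * (x:ℂ)).im = a.im + (-x) by simp; ring] at h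
    have h2 := lower_shift hca h
    rwa [abs_neg] at h2
  have lbv : cb * Eb * Real.exp (-4 * |x|)
      ≤ ‖Complex.Gamma (b - Complex.I * (x:ℂ))‖ := by
    have h := hlb (b - Complex.I * (x:ℂ)) (by simp)
    rw [show (b - Complex.I * (x:ℂ)).im = b.im + (-x) by simp; ring] at h
    have h2 := lower_shift hcb h
    rwa [abs_neg] at h2
  have lbw : cc0 * Ec * Real.exp (-4 * |x|)
      ≤ ‖Complex.Gamma (c + Complex.I * (x:ℂ))‖ := by
    have h := hlc (c + Complex.I * (x:ℂ)) (by simp)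
    rw [show (c + Complex.I * (x:ℂ)).im = c.im + x by simp] at h
    exact lower_shift hcc h
  set e4 : ℝ := Real.exp (-4 * |x|) with he4def
  have he4pos : 0 < e4 := Real.exp_pos _
  have hprod : K0 * e4^4
      ≤ ‖Complex.Gamma (a + Complex.I * (x:ℂ))‖ *
        ‖Complex.Gamma (b - Complex.I * (x:ℂ))‖ *
        ‖Complex.Gamma (a - Complex.I * (x:ℂ))‖ *
        ‖Complex.Gamma (c + Complex.I * (x:ℂ))‖ := by
    have m1 := mul_le_mul lbp lbv (by positivity) (norm_nonneg _)
    have m2 := mul_le_mul m1 lbq (by positivity)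
      (mul_nonneg (norm_nonneg _) (norm_nonneg _))
    have m3 := mul_le_mul m2 lbw (by positivity)
      (mul_nonneg (mul_nonneg (norm_nonneg _) (norm_nonneg _))
        (norm_nonneg _))
    calc K0 * e4^4 = ca * Ea * e4 * (cb * Eb * e4) * (ca * Ea * e4) * (cc0 * Ec * e4) := by
          rw [hK0def]; ring
      _ ≤ _ := m3
  have hFn : (0:ℝ) ≤ ‖F32 n (a + Complex.I * (x:ℂ)) (a - Complex.I * (x:ℂ))
      (a + b) (a + c)‖ := norm_nonneg _
  have step : ‖F32 n (a + Complex.I * (x:ℂ)) (a - Complex.I * (x:ℂ))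
      (a + b) (a + c)‖ * (K0 * e4^4) ≤ K2 := by
    calc ‖F32 n (a + Complex.I * (x:ℂ)) (a - Complex.I * (x:ℂ))
          (a + b) (a + c)‖ * (K0 * e4^4)
        ≤ ‖F32 n (a + Complex.I * (x:ℂ)) (a - Complex.I * (x:ℂ))
            (a + b) (a + c)‖ *
          (‖Complex.Gamma (a + Complex.I * (x:ℂ))‖ *
            ‖Complex.Gamma (b - Complex.I * (x:ℂ))‖ *
            ‖Complex.Gamma (a - Complex.I * (x:ℂ))‖ *
            ‖Complex.Gamma (c + Complex.I * (x:ℂ))‖) :=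
          mul_le_mul_of_nonneg_left hprod hFn
      _ = Gab * Gac * ‖∫ t in (0:ℝ)..1,
            (t:ℂ)^((a + Complex.I * (x:ℂ))-1) * (1-(t:ℂ))^((b - Complex.I * (x:ℂ))-1) *
            ∫ s in (0:ℝ)..1, (s:ℂ)^((a - Complex.I * (x:ℂ))-1) *
              (1-(s:ℂ))^((c + Complex.I * (x:ℂ))-1) * (1 - (t:ℂ) * s)^n‖ := heq
      _ ≤ Gab * Gac * (C1 * C2) := by
          apply mul_le_mul_of_nonneg_left hJ (by positivity)
      _ = K2 := by rw [hK2def]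
  -- conclude
  have hE2 : (1:ℝ) ≤ Real.exp (M * |x|) * e4^4 := by
    have he4 : e4^4 = Real.exp (-16 * |x|) := by
      rw [he4def, ← Real.exp_nat_mul]
      congr 1
      push_cast
      ring
    rw [he4, ← Real.exp_add]
    rw [show (1:ℝ) = Real.exp 0 by rw [Real.exp_zero]]
    apply Real.exp_le_exp.2
    have habs : 0 ≤ |x| := abs_nonneg x
    nlinarith
  have hN : (1:ℝ) ≤ ((1:ℝ) + n) ^ M := by
    apply Real.one_le_rpow _ hMpos.le
    have : (0:ℝ) ≤ (n:ℝ) := Nat.cast_nonneg n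
    linarith
  have hD : 0 < K0 * e4^4 := by positivity
  have final : K2 ≤ (M * Real.exp (M * |x|) * ((1:ℝ) + n) ^ M) * (K0 * e4^4) := by
    have hb1 : K2 ≤ M * K0 := by
      have h1 : K2 = K2 / K0 * K0 := (div_mul_cancel₀ K2 hK0.ne').symm
      have h2 : K2 / K0 ≤ M := by rw [hMdef]; linarith
      calc K2 = K2 / K0 * K0 := h1
        _ ≤ M * K0 := mul_le_mul_of_nonneg_right h2 hK0.le
    have hprod1 : (1:ℝ) ≤ (Real.exp (M * |x|) * e4^4) * (((1:ℝ) + n) ^ M) := by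
      nlinarith
    calc K2 ≤ M * K0 := hb1
      _ ≤ M * K0 * ((Real.exp (M * |x|) * e4^4) * (((1:ℝ) + n) ^ M)) :=
          le_mul_of_one_le_right (by positivity) hprod1
      _ = (M * Real.exp (M * |x|) * ((1:ℝ) + n) ^ M) * (K0 * e4^4) := by ring
  exact le_of_mul_le_mul_right (step.trans final) hD
end

section
/- For z, w in the upper half-plane H define H(z,w) = i^{1/2} · (|z − conj(w)| / (z − conj(w)))^{1/2}, with complex square roots taken in the principal branch. Then for every T ∈ SL(2, ℝ) and all z, w ∈ H: H(Tz, Tw)/H(z,w) = (j_T(z)/|j_T(z)|)^{1/2} · (j_T(w)/|j_T(w)|)^{−1/2}. -/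
/-- The point-pair invariant `H(z,w) = i^{1/2} (|z − w̄|/(z − w̄))^{1/2}`
(principal branches). -/
noncomputable def Hker (z w : ℂ) : ℂ :=
  Complex.I ^ ((1 : ℂ)/2) *
    (((‖z - (starRingEnd ℂ) w‖ : ℝ) : ℂ) / (z - (starRingEnd ℂ) w)) ^ ((1 : ℂ)/2)

/-- The Möbius action of `T ∈ SL(2,ℝ)` on the upper half-plane. -/
noncomputable def mobSL (T : Matrix.SpecialLinearGroup (Fin 2) ℝ) (z : ℂ) : ℂ :=
  ((T.1 0 0 : ℝ) * z + (T.1 0 1 : ℝ)) / ((T.1 1 0 : ℝ) * z + (T.1 1 1 : ℝ))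

/-- The automorphy factor `j_T(z) = c z + d` for `T = (a, b; c, d) ∈ SL(2,ℝ)`. -/
noncomputable def jSL (T : Matrix.SpecialLinearGroup (Fin 2) ℝ) (z : ℂ) : ℂ :=
  (T.1 1 0 : ℝ) * z + (T.1 1 1 : ℝ)

open Complex Real

lemma myLog_of_abs_one {x : ℂ} (hx : x ≠ 0) (h1 : ‖x‖ = 1) :
    Complex.log x = x.arg * I := by
  rw [Complex.log, h1, Real.log_one, Complex.ofReal_zero, zero_add]

lemma myHalf_pow {x : ℂ} (hx : x ≠ 0) (h1 : ‖x‖ = 1) :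
    x ^ ((1:ℂ)/2) = Complex.exp (x.arg * I / 2) := by
  rw [Complex.cpow_def_of_ne_zero hx, myLog_of_abs_one hx h1]
  ring_nf

lemma myHalf_pow_neg {x : ℂ} (hx : x ≠ 0) (h1 : ‖x‖ = 1) :
    x ^ (-(1:ℂ)/2) = Complex.exp (-(x.arg * I / 2)) := by
  rw [Complex.cpow_def_of_ne_zero hx, myLog_of_abs_one hx h1]
  congr 1
  ring

lemma myAbs_div_abs (v : ℂ) (hv : v ≠ 0) :
    ‖v / (‖v‖ : ℂ)‖ = 1 := by
  rw [norm_div, Complex.norm_real, norm_norm, div_self (norm_ne_zero_iff.mpr hv)]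

lemma myArg_div_abs (v : ℂ) (hv : v ≠ 0) :
    Complex.arg (v / (‖v‖ : ℂ)) = v.arg := by
  rw [div_eq_inv_mul, ← Complex.ofReal_inv,
    Complex.arg_real_mul _ (inv_pos.2 (norm_pos_iff.mpr hv))]

lemma myAbs_abs_div (v : ℂ) (hv : v ≠ 0) :
    ‖(‖v‖ : ℂ) / v‖ = 1 := by
  rw [norm_div, Complex.norm_real, norm_norm, div_self (norm_ne_zero_iff.mpr hv)]

lemma myArg_lt_pi {v : ℂ} (hv : 0 < v.im) : v.arg < π := by
  rcases (Complex.arg_le_pi v).lt_or_eq with h | h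
  · exact h
  · exact absurd (Complex.arg_eq_pi_iff.1 h).2 hv.ne'

lemma myArg_abs_div {v : ℂ} (hv : 0 < v.im) :
    Complex.arg ((‖v‖ : ℂ) / v) = -v.arg := by
  have hv0 : v ≠ 0 := fun h => by simp [h] at hv
  rw [div_eq_mul_inv, Complex.arg_real_mul _ (norm_pos_iff.mpr hv0), Complex.arg_inv,
    if_neg (myArg_lt_pi hv).ne]

lemma myArg_pos {v : ℂ} (hv : 0 < v.im) : 0 < v.arg := by
  rcases (Complex.arg_nonneg_iff.2 hv.le).lt_or_eq with h | h
  · exact h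
  · exact absurd (Complex.arg_eq_zero_iff.1 h.symm).2 hv.ne'

lemma myHker_eq {z w : ℂ} (h : 0 < (z - (starRingEnd ℂ) w).im) :
    Hker z w = Complex.exp ((π/2 : ℝ) * I / 2) *
      Complex.exp (-((z - (starRingEnd ℂ) w).arg * I / 2)) := by
  have hu : z - (starRingEnd ℂ) w ≠ 0 := fun hh => by simp [hh] at h
  have hI : Complex.I ^ ((1:ℂ)/2) = Complex.exp ((π/2 : ℝ) * I / 2) := by
    rw [myHalf_pow Complex.I_ne_zero Complex.norm_I, Complex.arg_I]
  rw [Hker, hI, myHalf_pow (by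
      exact div_ne_zero (Complex.ofReal_ne_zero.2 (norm_ne_zero_iff.mpr hu)) hu)
      (myAbs_abs_div _ hu), myArg_abs_div h]
  congr 1
  push_cast
  ring

lemma myJ_im (T : Matrix.SpecialLinearGroup (Fin 2) ℝ) (z : ℂ) :
    (jSL T z).im = T.1 1 0 * z.im := by
  simp [jSL]

lemma myDet (T : Matrix.SpecialLinearGroup (Fin 2) ℝ) :
    T.1 0 0 * T.1 1 1 - T.1 0 1 * T.1 1 0 = 1 := by
  have := T.2
  rwa [Matrix.det_fin_two] at this

lemma myJ_ne_zero (T : Matrix.SpecialLinearGroup (Fin 2) ℝ) {z : ℂ} (hz : 0 < z.im) :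
    jSL T z ≠ 0 := by
  intro h
  have him : T.1 1 0 * z.im = 0 := by rw [← myJ_im, h, Complex.zero_im]
  have hc : T.1 1 0 = 0 := by
    rcases mul_eq_zero.1 him with h' | h'
    · exact h'
    · exact absurd h' hz.ne'
  have hd : T.1 1 1 = 0 := by
    have := congrArg Complex.re h
    simpa [jSL, hc] using this
  have := myDet T
  rw [hc, hd] at this
  simp at this

lemma myKey (T : Matrix.SpecialLinearGroup (Fin 2) ℝ) {z w : ℂ}
    (hz : 0 < z.im) (hw : 0 < w.im) :
    mobSL T z - (starRingEnd ℂ) (mobSL T w)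
      = (z - (starRingEnd ℂ) w) / (jSL T z * (starRingEnd ℂ) (jSL T w)) := by
  have hjz : jSL T z ≠ 0 := myJ_ne_zero T hz
  have hjw : jSL T w ≠ 0 := myJ_ne_zero T hw
  have hjwc : (starRingEnd ℂ) (jSL T w) ≠ 0 := by
    simpa using hjw
  have hdet : ((T.1 0 0 : ℂ)) * (T.1 1 1 : ℂ) - (T.1 0 1 : ℂ) * (T.1 1 0 : ℂ) = 1 := by
    exact_mod_cast congrArg (Complex.ofReal) (myDet T)
  have hconj : (starRingEnd ℂ) (mobSL T w)
      = ((T.1 0 0 : ℝ) * (starRingEnd ℂ) w + (T.1 0 1 : ℝ))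
        / ((T.1 1 0 : ℝ) * (starRingEnd ℂ) w + (T.1 1 1 : ℝ)) := by
    simp [mobSL, map_div₀, map_add, map_mul, Complex.conj_ofReal]
  have hjwc' : ((T.1 1 0 : ℂ)) * (starRingEnd ℂ) w + (T.1 1 1 : ℂ) ≠ 0 := by
    have : (starRingEnd ℂ) (jSL T w) = (T.1 1 0 : ℂ) * (starRingEnd ℂ) w + (T.1 1 1 : ℂ) := by
      simp [jSL, map_add, map_mul, Complex.conj_ofReal]
    rw [← this]; exact hjwc
  rw [hconj]
  unfold mobSL jSL at *
  have h1 : ((T.1 1 0 : ℂ)) * z + (T.1 1 1 : ℂ) ≠ 0 := hjz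
  have h2 : (starRingEnd ℂ) ((T.1 1 0 : ℂ) * w + (T.1 1 1 : ℂ)) =
      (T.1 1 0 : ℂ) * (starRingEnd ℂ) w + (T.1 1 1 : ℂ) := by
    simp [map_add, map_mul, Complex.conj_ofReal]
  rw [h2]
  rw [div_sub_div _ _ h1 hjwc']
  congr 1
  linear_combination (z - (starRingEnd ℂ) w) * hdet

lemma myMob_im (T : Matrix.SpecialLinearGroup (Fin 2) ℝ) {z : ℂ} (hz : 0 < z.im) :
    0 < (mobSL T z).im := by
  have h := myKey T hz hz
  have hjz : jSL T z ≠ 0 := myJ_ne_zero T hz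
  have him : (mobSL T z - (starRingEnd ℂ) (mobSL T z)).im = 2 * (mobSL T z).im := by
    simp [Complex.sub_im, Complex.conj_im]; ring
  have hrhs : ((z - (starRingEnd ℂ) z) / (jSL T z * (starRingEnd ℂ) (jSL T z))).im
      = 2 * z.im / Complex.normSq (jSL T z) := by
    rw [Complex.mul_conj, Complex.div_ofReal_im]
    simp [Complex.sub_im, Complex.conj_im]
    ring
  have := congrArg Complex.im h
  rw [him, hrhs] at this
  have hpos : 0 < 2 * z.im / Complex.normSq (jSL T z) :=
    div_pos (by linarith) (Complex.normSq_pos.2 hjz)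
  linarith

lemma myArg_diff (T : Matrix.SpecialLinearGroup (Fin 2) ℝ) {z w : ℂ}
    (hz : 0 < z.im) (hw : 0 < w.im) :
    |(jSL T z).arg - (jSL T w).arg| < π := by
  have hpi := Real.pi_pos
  rcases lt_trichotomy (T.1 1 0) 0 with hc | hc | hc
  · have h1 : (jSL T z).im < 0 := by rw [myJ_im]; exact mul_neg_of_neg_of_pos hc hz
    have h2 : (jSL T w).im < 0 := by rw [myJ_im]; exact mul_neg_of_neg_of_pos hc hw
    have a1 := Complex.arg_neg_iff.2 h1
    have a2 := Complex.arg_neg_iff.2 h2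
    have b1 := Complex.neg_pi_lt_arg (jSL T z)
    have b2 := Complex.neg_pi_lt_arg (jSL T w)
    rw [abs_lt]; constructor <;> linarith
  · have h1 : jSL T z = jSL T w := by
      unfold jSL; rw [hc]; push_cast; ring
    rw [h1]; simpa using hpi
  · have h1 : 0 < (jSL T z).im := by rw [myJ_im]; exact mul_pos hc hz
    have h2 : 0 < (jSL T w).im := by rw [myJ_im]; exact mul_pos hc hw
    have a1 := myArg_pos h1
    have a2 := myArg_pos h2
    have b1 := myArg_lt_pi h1
    have b2 := myArg_lt_pi h2
    rw [abs_lt]; constructor <;> linarith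

lemma myArg_eq (T : Matrix.SpecialLinearGroup (Fin 2) ℝ) {z w : ℂ}
    (hz : 0 < z.im) (hw : 0 < w.im) :
    (mobSL T z - (starRingEnd ℂ) (mobSL T w)).arg
      = (z - (starRingEnd ℂ) w).arg - (jSL T z).arg + (jSL T w).arg := by
  have hpi := Real.pi_pos
  have hu : 0 < (z - (starRingEnd ℂ) w).im := by
    simp [Complex.sub_im, Complex.conj_im]; linarith
  have hu' : 0 < (mobSL T z - (starRingEnd ℂ) (mobSL T w)).im := by
    have h1 := myMob_im T hz
    have h2 := myMob_im T hw
    simp [Complex.sub_im, Complex.conj_im]; linarith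
  have hune : z - (starRingEnd ℂ) w ≠ 0 := fun hh => by simp [hh] at hu
  have hjz : jSL T z ≠ 0 := myJ_ne_zero T hz
  have hjw : jSL T w ≠ 0 := myJ_ne_zero T hw
  have hjwc : (starRingEnd ℂ) (jSL T w) ≠ 0 := by simpa using hjw
  have hang : ((mobSL T z - (starRingEnd ℂ) (mobSL T w)).arg : Real.Angle)
      = (((z - (starRingEnd ℂ) w).arg - (jSL T z).arg + (jSL T w).arg : ℝ) : Real.Angle) := by
    rw [myKey T hz hw, Complex.arg_div_coe_angle hune (mul_ne_zero hjz hjwc),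
      Complex.arg_mul_coe_angle hjz hjwc, Complex.arg_conj_coe_angle,
      Real.Angle.coe_add, Real.Angle.coe_sub]
    abel
  obtain ⟨k, hk⟩ := Real.Angle.angle_eq_iff_two_pi_dvd_sub.1 hang
  have hθ'1 := myArg_pos hu'
  have hθ'2 := myArg_lt_pi hu'
  have hθ1 := myArg_pos hu
  have hθ2 := myArg_lt_pi hu
  have hd := abs_lt.1 (myArg_diff T hz hw)
  have hk0 : k = 0 := by
    by_contra hk0
    have : (1 : ℝ) ≤ |(k : ℝ)| := by
      exact_mod_cast Int.one_le_abs (by exact_mod_cast hk0)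
    have habs : |(2:ℝ) * π * k| < 2 * π := by
      rw [← hk]
      rw [abs_lt]; constructor <;> [skip; skip] <;> simp only [sub_lt_iff_lt_add, lt_sub_iff_add_lt] at * <;> nlinarith
    rw [abs_mul, abs_of_pos (by linarith : (0:ℝ) < 2*π)] at habs
    nlinarith
  rw [hk0] at hk
  push_cast at hk
  linarith

/-- For every `T ∈ SL(2,ℝ)` and `z, w` in the upper half-plane:
`H(Tz, Tw)/H(z,w) = (j_T(z)/|j_T(z)|)^{1/2} (j_T(w)/|j_T(w)|)^{−1/2}`. -/
theorem stmt15 (T : Matrix.SpecialLinearGroup (Fin 2) ℝ) (z w : ℂ)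
    (hz : 0 < z.im) (hw : 0 < w.im) :
    Hker (mobSL T z) (mobSL T w) / Hker z w =
      (jSL T z / ((‖jSL T z‖ : ℝ) : ℂ)) ^ ((1 : ℂ)/2) *
      (jSL T w / ((‖jSL T w‖ : ℝ) : ℂ)) ^ (-(1 : ℂ)/2) := by
  have hu : 0 < (z - (starRingEnd ℂ) w).im := by
    simp [Complex.sub_im, Complex.conj_im]; linarith
  have hu' : 0 < (mobSL T z - (starRingEnd ℂ) (mobSL T w)).im := by
    have h1 := myMob_im T hz
    have h2 := myMob_im T hw
    simp [Complex.sub_im, Complex.conj_im]; linarith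
  have hjz : jSL T z ≠ 0 := myJ_ne_zero T hz
  have hjw : jSL T w ≠ 0 := myJ_ne_zero T hw
  have r1 : (jSL T z / ((‖jSL T z‖ : ℝ) : ℂ)) ^ ((1:ℂ)/2)
      = Complex.exp ((jSL T z).arg * I / 2) := by
    rw [myHalf_pow (div_ne_zero hjz (Complex.ofReal_ne_zero.2 (norm_ne_zero_iff.mpr hjz)))
      (myAbs_div_abs _ hjz), myArg_div_abs _ hjz]
  have r2 : (jSL T w / ((‖jSL T w‖ : ℝ) : ℂ)) ^ (-(1:ℂ)/2)
      = Complex.exp (-((jSL T w).arg * I / 2)) := by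
    rw [myHalf_pow_neg (div_ne_zero hjw (Complex.ofReal_ne_zero.2 (norm_ne_zero_iff.mpr hjw)))
      (myAbs_div_abs _ hjw), myArg_div_abs _ hjw]
  rw [myHker_eq hu, myHker_eq hu', r1, r2,
    ← Complex.exp_add, ← Complex.exp_add, ← Complex.exp_add, ← Complex.exp_sub]
  congr 1
  have harg := myArg_eq T hz hw
  have hcast : ((mobSL T z - (starRingEnd ℂ) (mobSL T w)).arg : ℂ)
      = ((z - (starRingEnd ℂ) w).arg : ℂ) - (jSL T z).arg + (jSL T w).arg := by
    exact_mod_cast congrArg (Complex.ofReal) harg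
  linear_combination (-(Complex.I)/2) * hcast
end
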